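/- Let f : ℝ^d → ℝ be L-smooth with L > 0, let x* be a global minimizer of f, and let x₀ ∈ ℝ^d satisfy |f(x₀) - f(x*)| ≤ R. On a probability space with filtration (F_t), suppose SGD is run for T iterations as follows: at each iteration t ∈ {1,…,T}, a stochastic gradient g_t = ∇f(x_{t-1}) + ξ_t is received, where the noise ξ_t satisfies E[ξ_t | F_{t-1}] = 0 and E[‖ξ_t‖² | F_{t-1}] ≤ σ² (with x_{t-1} being F_{t-1}-measurable and σ > 0), and the iterate is updated with the deterministic-in-the-gradient step size x_t = x_{t-1} - (1/L) · (‖∇f(x_{t-1})‖² / (‖∇f(x_{t-1})‖² + σ²)) · g_t. Then min_{t=1,…,T} E[‖∇f(x_t)‖²] ≤ 2LR/T + σ·√(2LR/T). -/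

import Mathlib

open MeasureTheory ProbabilityTheory
open scoped RealInnerProductSpace

lemma coord_abs_le_norm {d : ℕ} (v : EuclideanSpace ℝ (Fin d)) (i : Fin d) : |v i| ≤ ‖v‖ := by
  rw [EuclideanSpace.norm_eq]
  rw [show |v i| = Real.sqrt (|v i| ^ 2) by rw [Real.sqrt_sq_eq_abs, abs_abs]]
  apply Real.sqrt_le_sqrt
  have := Finset.single_le_sum (f := fun j => ‖v j‖ ^ 2)
    (fun j _ => by positivity) (Finset.mem_univ i)
  simpa [Real.norm_eq_abs] using this

/-- If `v` is `m`-measurable and bounded and `w` is integrable with zero conditional mean,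
then `E[⟪v, w⟫] = 0`. -/
lemma integral_inner_eq_zero {d : ℕ} {Ω : Type*} {m : MeasurableSpace Ω} {m0 : MeasurableSpace Ω} {μ : Measure Ω}
    [IsProbabilityMeasure μ] (hm : m ≤ m0)
    {v w : Ω → EuclideanSpace ℝ (Fin d)} (hv : StronglyMeasurable[m] v)
    {C : ℝ} (hvC : ∀ ω, ‖v ω‖ ≤ C) (hw : Integrable w μ) (hwm : μ[w|m] =ᵐ[μ] 0) :
    ∫ ω, ⟪v ω, w ω⟫ ∂μ = 0 := by
  have hwi : ∀ i : Fin d, Integrable (fun ω => w ω i) μ := fun i =>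
    (EuclideanSpace.proj i : EuclideanSpace ℝ (Fin d) →L[ℝ] ℝ).integrable_comp hw
  have coord : ∀ i : Fin d, μ[fun ω => w ω i|m] =ᵐ[μ] 0 := by
    intro i
    refine (ae_eq_condExp_of_forall_setIntegral_eq hm (hwi i) ?_ ?_ ?_).symm
    · intro s _ _
      have : Integrable (fun _ : Ω => (0:ℝ)) μ := integrable_const 0
      exact this.integrableOn
    · intro s hs hμs
      have h1 : ∫ ω in s, (μ[w|m]) ω ∂μ = 0 := by
        rw [integral_congr_ae (ae_restrict_of_ae hwm)]
        simp
      have h1' : ∫ ω in s, w ω ∂μ = 0 := by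
        rw [← setIntegral_condExp hm hw hs, h1]
      have h2 : ∫ ω in s, w ω i ∂μ =
          (EuclideanSpace.proj i : EuclideanSpace ℝ (Fin d) →L[ℝ] ℝ) (∫ ω in s, w ω ∂μ) :=
        ((EuclideanSpace.proj i : EuclideanSpace ℝ (Fin d) →L[ℝ] ℝ).integral_comp_comm
          hw.integrableOn)
      simp [h2, h1']
    · exact StronglyMeasurable.aestronglyMeasurable (@stronglyMeasurable_const Ω ℝ m _ 0)
  have hvi : ∀ i : Fin d, StronglyMeasurable[m] (fun ω => v ω i) :=
    fun i => (EuclideanSpace.proj i :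
      EuclideanSpace ℝ (Fin d) →L[ℝ] ℝ).continuous.comp_stronglyMeasurable hv
  have hexp : (fun ω => ⟪v ω, w ω⟫) = fun ω => ∑ i : Fin d, v ω i * w ω i := by
    funext ω
    simp [PiLp.inner_apply, RCLike.inner_apply, conj_trivial]
    exact Finset.sum_congr rfl (fun i _ => mul_comm _ _)
  have hint : ∀ i : Fin d, Integrable (fun ω => v ω i * w ω i) μ := by
    intro i
    exact (hwi i).bdd_mul ((hvi i).mono hm).aestronglyMeasurable
      (c := C) (Filter.Eventually.of_forall fun ω => (Real.norm_eq_abs _ ▸ (coord_abs_le_norm (v ω) i).trans (hvC ω)))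
  rw [hexp, integral_finset_sum _ fun i _ => hint i]
  refine Finset.sum_eq_zero fun i _ => ?_
  have hpull := condExp_mul_of_stronglyMeasurable_left (μ := μ) (m := m) (hvi i)
    (by simpa [Pi.mul_def] using hint i) (hwi i)
  have hz : (fun ω => v ω i) * μ[fun ω => w ω i|m] =ᵐ[μ] 0 := by
    filter_upwards [coord i] with ω hω
    simp [Pi.mul_apply, Pi.zero_apply, hω]
  have hz2 : μ[(fun ω => v ω i) * fun ω => w ω i|m] =ᵐ[μ] 0 := hpull.trans hz
  have hI : ∫ ω, v ω i * w ω i ∂μ =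
      ∫ ω, ((fun ω => v ω i) * fun ω => w ω i) ω ∂μ := rfl
  rw [hI, ← integral_condExp hm, integral_congr_ae hz2]
  simp

/-- Pull-out bound: `E[h q] ≤ c E[h]` when `0 ≤ h ≤ B` is `m`-measurable
and `E[q|m] ≤ c` a.e. -/
lemma integral_mul_le_of_condexp_le {Ω : Type*} {m : MeasurableSpace Ω} {m0 : MeasurableSpace Ω} {μ : Measure Ω}
    [IsProbabilityMeasure μ] (hm : m ≤ m0)
    {h q : Ω → ℝ} (hh : StronglyMeasurable[m] h) {B c : ℝ}
    (hh0 : ∀ ω, 0 ≤ h ω) (hhB : ∀ ω, h ω ≤ B)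
    (hq : Integrable q μ) (hqc : ∀ᵐ ω ∂μ, (μ[q|m]) ω ≤ c) :
    ∫ ω, h ω * q ω ∂μ ≤ c * ∫ ω, h ω ∂μ := by
  have hmeas : AEStronglyMeasurable h μ := (hh.mono hm).aestronglyMeasurable
  have hbd : ∃ C, ∀ ω, ‖h ω‖ ≤ C := ⟨B, fun ω => by
    rw [Real.norm_eq_abs, abs_of_nonneg (hh0 ω)]; exact hhB ω⟩
  have hint : Integrable (fun ω => h ω * q ω) μ := hq.bdd_mul hmeas (Filter.Eventually.of_forall hbd.choose_spec)
  have hinth : Integrable h μ := by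
    refine (integrable_const B).mono' hmeas ?_
    filter_upwards with ω
    rw [Real.norm_eq_abs, abs_of_nonneg (hh0 ω)]; exact hhB ω
  have hpull := condExp_mul_of_stronglyMeasurable_left (μ := μ) (m := m) hh
    (by simpa [Pi.mul_def] using hint) hq
  have h1 : ∫ ω, h ω * q ω ∂μ = ∫ ω, h ω * (μ[q|m]) ω ∂μ := by
    rw [← integral_condExp hm (f := fun ω => h ω * q ω)]
    exact integral_congr_ae hpull
  rw [h1]
  have h2 : ∫ ω, h ω * (μ[q|m]) ω ∂μ ≤ ∫ ω, h ω * c ∂μ := by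
    refine integral_mono_ae (integrable_condExp.bdd_mul hmeas (Filter.Eventually.of_forall hbd.choose_spec)) (hinth.mul_const c) ?_
    filter_upwards [hqc] with ω hω
    exact mul_le_mul_of_nonneg_left hω (hh0 ω)
  calc ∫ ω, h ω * (μ[q|m]) ω ∂μ ≤ ∫ ω, h ω * c ∂μ := h2
    _ = c * ∫ ω, h ω ∂μ := by rw [integral_mul_const]; ring
open scoped RealInnerProductSpace

variable {d : ℕ}
local notation "E" => EuclideanSpace ℝ (Fin d)

/-- Descent lemma for L-smooth functions. -/
lemma descent_lemma {f : EuclideanSpace ℝ (Fin d) → ℝ} {L : ℝ} (hL : 0 < L)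
    (hdiff : Differentiable ℝ f)
    (hsmooth : ∀ x y, ‖gradient f x - gradient f y‖ ≤ L * ‖x - y‖) (x y : E) :
    f y ≤ f x + ⟪gradient f x, y - x⟫ + L / 2 * ‖y - x‖ ^ 2 := by
  set c1 : ℝ := ⟪gradient f x, y - x⟫ with hc1
  set c2 : ℝ := L / 2 * ‖y - x‖ ^ 2 with hc2
  set g : ℝ → ℝ := fun t => f (x + t • (y - x)) - t * c1 - t ^ 2 * c2 with hg
  have hline : ∀ t : ℝ, HasDerivAt (fun t : ℝ => x + t • (y - x)) (y - x) t := by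
    intro t
    simpa using ((hasDerivAt_id t).smul_const (y - x)).const_add x
  have hfd : ∀ t : ℝ, HasDerivAt (fun t => f (x + t • (y - x)))
      ⟪gradient f (x + t • (y - x)), y - x⟫ t := by
    intro t
    have h1 : HasFDerivAt f (InnerProductSpace.toDual ℝ _ (gradient f (x + t • (y - x))))
        (x + t • (y - x)) :=
      hasGradientAt_iff_hasFDerivAt.mp (hdiff _).hasGradientAt
    exact h1.comp_hasDerivAt t (hline t)
  have hgd : ∀ t : ℝ, HasDerivAt g
      (⟪gradient f (x + t • (y - x)), y - x⟫ - c1 - 2 * t * c2) t := by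
    intro t
    have h2 : HasDerivAt (fun t : ℝ => t * c1) c1 t := hasDerivAt_mul_const c1
    have h3 : HasDerivAt (fun t : ℝ => t ^ 2 * c2) (2 * t * c2) t := by
      simpa [mul_comm] using (hasDerivAt_pow 2 t).mul_const c2
    exact ((hfd t).sub h2).sub h3
  have hanti : AntitoneOn g (Set.Icc 0 1) := by
    apply antitoneOn_of_deriv_nonpos (convex_Icc 0 1)
    · exact fun t _ => ((hgd t).continuousAt).continuousWithinAt
    · exact fun t _ => ((hgd t).differentiableAt).differentiableWithinAt
    · intro t ht
      rw [interior_Icc] at ht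
      rw [(hgd t).deriv]
      have hip : ⟪gradient f (x + t • (y - x)) - gradient f x, y - x⟫ ≤
          L * t * ‖y - x‖ ^ 2 := by
        calc ⟪gradient f (x + t • (y - x)) - gradient f x, y - x⟫
            ≤ ‖gradient f (x + t • (y - x)) - gradient f x‖ * ‖y - x‖ :=
              real_inner_le_norm _ _
          _ ≤ L * ‖(x + t • (y - x)) - x‖ * ‖y - x‖ := by
              have := hsmooth (x + t • (y - x)) x
              nlinarith [norm_nonneg (y - x)]
          _ = L * t * ‖y - x‖ ^ 2 := by
              rw [add_sub_cancel_left, norm_smul]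
              simp [abs_of_pos ht.1]
              ring
      rw [inner_sub_left] at hip
      simp only [hc1, hc2] at *
      nlinarith
  have h01 : g 1 ≤ g 0 := hanti (Set.mem_Icc.mpr ⟨le_refl 0, zero_le_one⟩)
    (Set.mem_Icc.mpr ⟨zero_le_one, le_refl 1⟩) zero_le_one
  simp only [hg, one_smul, add_sub_cancel, one_pow, one_mul, zero_smul, add_zero,
    zero_mul, sub_zero, zero_pow, two_ne_zero] at h01
  linarith

lemma grad_sq_le_aux {d : ℕ} {f : EuclideanSpace ℝ (Fin d) → ℝ} {L : ℝ} (hL : 0 < L)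
    (hdiff : Differentiable ℝ f)
    (hsmooth : ∀ x y, ‖gradient f x - gradient f y‖ ≤ L * ‖x - y‖)
    (xstar : EuclideanSpace ℝ (Fin d)) (hmin : ∀ y, f xstar ≤ f y)
    (x : EuclideanSpace ℝ (Fin d)) :
    ‖gradient f x‖ ^ 2 ≤ 2 * L * (f x - f xstar) := by
  have hdesc := descent_lemma hL hdiff hsmooth x (x - (1 / L) • gradient f x)
  have h1 : x - (1 / L) • gradient f x - x = -((1 / L) • gradient f x) := by abel
  rw [h1] at hdesc
  have h2 : ⟪gradient f x, -((1 / L) • gradient f x)⟫ = -(1 / L) * ‖gradient f x‖ ^ 2 := by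
    rw [inner_neg_right, real_inner_smul_right, real_inner_self_eq_norm_sq]; ring
  have h3 : ‖-((1 / L) • gradient f x)‖ ^ 2 = (1 / L) ^ 2 * ‖gradient f x‖ ^ 2 := by
    rw [norm_neg, norm_smul, mul_pow, Real.norm_eq_abs, sq_abs]
  rw [h2, h3] at hdesc
  have h4 := hmin (x - (1 / L) • gradient f x)
  have hL' : L ≠ 0 := ne_of_gt hL
  have : L / 2 * ((1 / L) ^ 2 * ‖gradient f x‖ ^ 2) = 1 / (2 * L) * ‖gradient f x‖ ^ 2 := by
    field_simp
  rw [this] at hdesc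
  have hrel : (1 / L) * ‖gradient f x‖ ^ 2 = 2 * (1 / (2 * L) * ‖gradient f x‖ ^ 2) := by
    field_simp
  have h6 : 1 / (2 * L) * ‖gradient f x‖ ^ 2 ≤ f x - f xstar := by linarith
  have h7 := mul_le_mul_of_nonneg_left h6 (le_of_lt (by positivity : (0:ℝ) < 2 * L))
  have h8 : 2 * L * (1 / (2 * L) * ‖gradient f x‖ ^ 2) = ‖gradient f x‖ ^ 2 := by
    field_simp
  linarith
lemma step_pointwise {d : ℕ} {f : EuclideanSpace ℝ (Fin d) → ℝ} {L : ℝ} (hL : 0 < L)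
    (hdiff : Differentiable ℝ f)
    (hsmooth : ∀ x y, ‖gradient f x - gradient f y‖ ≤ L * ‖x - y‖)
    (p q w : EuclideanSpace ℝ (Fin d)) {η : ℝ}
    (hq : q = p - η • (gradient f p + w)) (c : ℝ) :
    f q - c ≤ (f p - c) + (L * η ^ 2 - η) * ⟪gradient f p, w⟫
      + L / 2 * η ^ 2 * ‖w‖ ^ 2 + (L / 2 * η ^ 2 - η) * ‖gradient f p‖ ^ 2 := by
  have hdesc := descent_lemma hL hdiff hsmooth p q
  have hd : q - p = -(η • (gradient f p + w)) := by rw [hq]; abel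
  rw [hd] at hdesc
  have hip : ⟪gradient f p, -(η • (gradient f p + w))⟫ =
      -(η * (‖gradient f p‖ ^ 2 + ⟪gradient f p, w⟫)) := by
    rw [inner_neg_right, real_inner_smul_right, inner_add_right, real_inner_self_eq_norm_sq]
  have hns : ‖-(η • (gradient f p + w))‖ ^ 2 =
      η ^ 2 * (‖gradient f p‖ ^ 2 + 2 * ⟪gradient f p, w⟫ + ‖w‖ ^ 2) := by
    rw [norm_neg, norm_smul, mul_pow, Real.norm_eq_abs, sq_abs, norm_add_sq_real]
  rw [hip, hns] at hdesc
  nlinarith [hdesc]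

lemma coeff_bound {L σ G : ℝ} (hL : 0 < L) (hσ : 0 < σ) (hG : 0 ≤ G) :
    |L * ((1 / L) * (G ^ 2 / (G ^ 2 + σ ^ 2))) ^ 2 -
      (1 / L) * (G ^ 2 / (G ^ 2 + σ ^ 2))| * G ≤ σ / (2 * L) := by
  have hd : (0:ℝ) < G ^ 2 + σ ^ 2 := by positivity
  set u : ℝ := G ^ 2 / (G ^ 2 + σ ^ 2) with hu
  have hu0 : 0 ≤ u := by positivity
  have hu1 : u ≤ 1 := by rw [hu, div_le_one hd]; nlinarith
  have h1 : L * ((1 / L) * u) ^ 2 - (1 / L) * u = -((1 / L) * (u * (1 - u))) := by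
    field_simp; ring
  rw [h1, abs_neg, abs_of_nonneg (mul_nonneg (by positivity)
    (mul_nonneg hu0 (by linarith : (0:ℝ) ≤ 1 - u)))]
  have h2 : u * (1 - u) * G ≤ σ / 2 := by
    have h1u : 1 - u = σ ^ 2 / (G ^ 2 + σ ^ 2) := by rw [hu]; field_simp; ring
    rw [hu, h1u, div_mul_div_comm, div_mul_eq_mul_div, div_le_iff₀ (by positivity)]
    nlinarith [mul_nonneg hσ.le (sq_nonneg (G ^ 2 - G * σ)), mul_nonneg hσ.le (sq_nonneg (G * σ)),
      mul_nonneg hσ.le (sq_nonneg σ)]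
  calc (1 / L) * (u * (1 - u)) * G = (1 / L) * (u * (1 - u) * G) := by ring
    _ ≤ (1 / L) * (σ / 2) := by
        apply mul_le_mul_of_nonneg_left h2 (by positivity)
    _ = σ / (2 * L) := by rw [div_mul_div_comm, one_mul, mul_comm L 2]

lemma ptwise_sq_le {σ G : ℝ} (hσ : 0 < σ) (hG : 0 ≤ G) :
    G ^ 2 ≤ (G ^ 2 / (G ^ 2 + σ ^ 2)) * G ^ 2 +
      σ * Real.sqrt ((G ^ 2 / (G ^ 2 + σ ^ 2)) * G ^ 2) := by
  have hd : (0:ℝ) < G ^ 2 + σ ^ 2 := by positivity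
  set s : ℝ := Real.sqrt (G ^ 2 + σ ^ 2) with hsdef
  have hs0 : 0 < s := Real.sqrt_pos.mpr hd
  have hs2 : s ^ 2 = G ^ 2 + σ ^ 2 := Real.sq_sqrt hd.le
  have hσs : σ ≤ s := by
    have h := Real.sqrt_le_sqrt (by nlinarith : σ ^ 2 ≤ G ^ 2 + σ ^ 2)
    rwa [Real.sqrt_sq hσ.le] at h
  have hsq : (G ^ 2 / (G ^ 2 + σ ^ 2)) * G ^ 2 = (G ^ 2 / s) ^ 2 := by
    rw [div_pow, ← hs2]; ring
  rw [hsq, Real.sqrt_sq (by positivity)]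
  have e : (G ^ 2 / s) ^ 2 + σ * (G ^ 2 / s) = (G ^ 4 + σ * G ^ 2 * s) / s ^ 2 := by
    field_simp
  rw [e, le_div_iff₀ (by positivity : (0:ℝ) < s ^ 2)]
  have hs2' : G ^ 2 * s ^ 2 = G ^ 4 + σ ^ 2 * G ^ 2 := by rw [hs2]; ring
  have h3 : 0 ≤ σ * G ^ 2 * (s - σ) :=
    mul_nonneg (mul_nonneg hσ.le (sq_nonneg G)) (sub_nonneg.mpr hσs)
  nlinarith [hs2', h3]

open MeasureTheory in
lemma integrable_sqrt {Ω : Type*} {m0 : MeasurableSpace Ω} {μ : Measure Ω}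
    [IsProbabilityMeasure μ] {p : Ω → ℝ} (hp : ∀ ω, 0 ≤ p ω) (hpi : Integrable p μ) :
    Integrable (fun ω => Real.sqrt (p ω)) μ := by
  refine (hpi.add (integrable_const 1)).mono' ?_ ?_
  · exact (Real.continuous_sqrt.comp_aestronglyMeasurable hpi.1)
  · filter_upwards with ω
    rw [Real.norm_eq_abs, abs_of_nonneg (Real.sqrt_nonneg _)]
    have h1 : Real.sqrt (p ω) ≤ p ω + 1 := by
      rcases le_total (p ω) 1 with h | h
      · have h2 : Real.sqrt (p ω) ≤ 1 := by
          have := Real.sqrt_le_sqrt h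
          simpa using this
        linarith [hp ω]
      · have h2 := Real.sqrt_le_sqrt (by nlinarith [hp ω] : p ω ≤ p ω ^ 2)
        rw [Real.sqrt_sq (hp ω)] at h2
        linarith
    simpa [Pi.add_apply] using h1

open MeasureTheory in
lemma integral_sqrt_le_sqrt_integral {Ω : Type*} {m0 : MeasurableSpace Ω} {μ : Measure Ω}
    [IsProbabilityMeasure μ] {p : Ω → ℝ} (hp : ∀ ω, 0 ≤ p ω) (hpi : Integrable p μ) :
    ∫ ω, Real.sqrt (p ω) ∂μ ≤ Real.sqrt (∫ ω, p ω ∂μ) := by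
  have hb0 : 0 ≤ ∫ ω, p ω ∂μ := integral_nonneg hp
  have hsqint : Integrable (fun ω => Real.sqrt (p ω)) μ := integrable_sqrt hp hpi
  rcases eq_or_lt_of_le hb0 with hb | hb
  · have hpz : p =ᵐ[μ] 0 := (integral_eq_zero_iff_of_nonneg hp hpi).mp hb.symm
    have : (fun ω => Real.sqrt (p ω)) =ᵐ[μ] 0 := by
      filter_upwards [hpz] with ω hω; simp [hω]
    rw [integral_congr_ae this]
    simp [Real.sqrt_nonneg]
  · set c : ℝ := Real.sqrt (∫ ω, p ω ∂μ) with hc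
    have hcpos : 0 < c := Real.sqrt_pos.mpr hb
    have hc2 : c ^ 2 = ∫ ω, p ω ∂μ := Real.sq_sqrt hb0
    have hpt : ∀ ω, Real.sqrt (p ω) ≤ p ω * (2 * c)⁻¹ + c / 2 := by
      intro ω
      have h := sq_nonneg (Real.sqrt (p ω) - c)
      rw [sub_sq, Real.sq_sqrt (hp ω)] at h
      rw [← sub_nonneg]
      have hexp : p ω * (2 * c)⁻¹ + c / 2 - Real.sqrt (p ω) =
          (p ω - 2 * Real.sqrt (p ω) * c + c ^ 2) / (2 * c) := by
        field_simp; ring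
      rw [hexp]
      exact div_nonneg h (by positivity)
  -- integrate
    calc ∫ ω, Real.sqrt (p ω) ∂μ
        ≤ ∫ ω, (p ω * (2 * c)⁻¹ + c / 2) ∂μ := by
          refine integral_mono hsqint ((hpi.mul_const _).add (integrable_const _)) hpt
      _ = (∫ ω, p ω ∂μ) * (2 * c)⁻¹ + c / 2 := by
          rw [integral_add (hpi.mul_const _) (integrable_const _), integral_mul_const,
            integral_const]
          simp
      _ = c := by rw [← hc2]; field_simp; ring
set_option maxHeartbeats 1000000 in
/-- SGD with the deterministic-in-the-gradient step size
`ηₜ = (1/L)·‖∇f(x_{t-1})‖²/(‖∇f(x_{t-1})‖² + σ²)` applied to the stochastic gradient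
`gₜ = ∇f(x_{t-1}) + ξₜ` (zero conditional mean, conditional second moment `≤ σ²`),
on an `L`-smooth `f` with `|f(x₀) - f(x*)| ≤ R` for a global minimizer `x*`, satisfies
`min_{t=1..T} E[‖∇f(xₜ)‖²] ≤ 2LR/T + σ√(2LR/T)`. -/
theorem stmt_2 {d : ℕ} {f : EuclideanSpace ℝ (Fin d) → ℝ} {L R σ : ℝ}
    (hL : 0 < L) (hσ : 0 < σ)
    (hdiff : Differentiable ℝ f)
    (hsmooth : ∀ x y, ‖gradient f x - gradient f y‖ ≤ L * ‖x - y‖)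
    (xstar : EuclideanSpace ℝ (Fin d)) (hmin : ∀ y, f xstar ≤ f y)
    {Ω : Type*} {m0 : MeasurableSpace Ω} {μ : Measure Ω} [IsProbabilityMeasure μ]
    (F : Filtration ℕ m0)
    (T : ℕ) (hT : 1 ≤ T)
    (x : ℕ → Ω → EuclideanSpace ℝ (Fin d))
    (ξ : ℕ → Ω → EuclideanSpace ℝ (Fin d))
    (hξmeas : ∀ t, Measurable (ξ t))
    (hξint : ∀ t, Integrable (ξ t) μ)
    (hξint2 : ∀ t, Integrable (fun ω => ‖ξ t ω‖ ^ 2) μ)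
    (x₀ : EuclideanSpace ℝ (Fin d)) (hx0 : ∀ ω, x 0 ω = x₀)
    (hR : |f x₀ - f xstar| ≤ R)
    (hadapted : ∀ t, 1 ≤ t → t ≤ T → StronglyMeasurable[F (t - 1)] (x (t - 1)))
    (hmean : ∀ t, 1 ≤ t → t ≤ T → μ[ξ t|F (t - 1)] =ᵐ[μ] 0)
    (hvar : ∀ t, 1 ≤ t → t ≤ T →
      ∀ᵐ ω ∂μ, (μ[fun ω' => ‖ξ t ω'‖ ^ 2|F (t - 1)]) ω ≤ σ ^ 2)
    (hupdate : ∀ t, 1 ≤ t → t ≤ T → ∀ ω,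
      x t ω = x (t - 1) ω -
        ((1 / L) * (‖gradient f (x (t - 1) ω)‖ ^ 2 /
            (‖gradient f (x (t - 1) ω)‖ ^ 2 + σ ^ 2))) •
          (gradient f (x (t - 1) ω) + ξ t ω)) :
    ∃ t, 1 ≤ t ∧ t ≤ T ∧
      ∫ ω, ‖gradient f (x t ω)‖ ^ 2 ∂μ ≤
        2 * L * R / T + σ * Real.sqrt (2 * L * R / T) := by
  have hR0 : 0 ≤ R := (abs_nonneg _).trans hR
  have hgradcont : Continuous (gradient f) := by
    have hlip : LipschitzWith (Real.toNNReal L) (gradient f) := by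
      apply LipschitzWith.of_dist_le_mul
      intro p q
      rw [dist_eq_norm, dist_eq_norm, Real.coe_toNNReal L hL.le]
      exact hsmooth p q
    exact hlip.continuous
  have hfcont : Continuous f := hdiff.continuous
  -- measurability and integrability of the iterates
  have hmi : ∀ t, t ≤ T → Measurable (x t) ∧
      Integrable (fun ω => f (x t ω) - f xstar) μ := by
    intro t
    induction t with
    | zero =>
      intro _
      have hx0' : x 0 = fun _ => x₀ := funext hx0
      refine ⟨by rw [hx0']; exact measurable_const, ?_⟩
      have h2 : (fun ω => f (x 0 ω) - f xstar) = fun _ => f x₀ - f xstar := by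
        funext ω; rw [hx0]
      rw [h2]; exact integrable_const _
    | succ n ih =>
      intro hsn
      obtain ⟨hxm, hfi⟩ := ih (Nat.le_of_succ_le hsn)
      have h1n : 1 ≤ n + 1 := Nat.le_add_left 1 n
      have hupd := hupdate (n + 1) h1n hsn
      simp only [Nat.add_sub_cancel] at hupd
      have hgm : Measurable (fun ω => gradient f (x n ω)) := hgradcont.measurable.comp hxm
      have hηm : Measurable (fun ω =>
          (1 / L) * (‖gradient f (x n ω)‖ ^ 2 / (‖gradient f (x n ω)‖ ^ 2 + σ ^ 2))) :=
        ((hgm.norm.pow_const 2).div ((hgm.norm.pow_const 2).add_const _)).const_mul _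
      have hxm' : Measurable (x (n + 1)) := by
        have hx1 : x (n + 1) = fun ω => x n ω -
            ((1 / L) * (‖gradient f (x n ω)‖ ^ 2 / (‖gradient f (x n ω)‖ ^ 2 + σ ^ 2))) •
              (gradient f (x n ω) + ξ (n + 1) ω) := funext hupd
        rw [hx1]
        exact hxm.sub (hηm.smul (hgm.add (hξmeas (n + 1))))
      refine ⟨hxm', ?_⟩
      have hbound : ∀ ω, f (x (n + 1) ω) - f xstar ≤ (f (x n ω) - f xstar)
          + σ / (2 * L) * ‖ξ (n + 1) ω‖ + 1 / (2 * L) * ‖ξ (n + 1) ω‖ ^ 2 := by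
        intro ω
        set G : ℝ := ‖gradient f (x n ω)‖ with hGd
        set η : ℝ := (1 / L) * (G ^ 2 / (G ^ 2 + σ ^ 2)) with hηd
        have hptw := step_pointwise hL hdiff hsmooth (x n ω) (x (n + 1) ω) (ξ (n + 1) ω)
          (hupd ω) (f xstar)
        rw [← hGd, ← hηd] at hptw
        have hGnn : 0 ≤ G := norm_nonneg _
        have hd0 : (0:ℝ) < G ^ 2 + σ ^ 2 := by positivity
        have hu1 : G ^ 2 / (G ^ 2 + σ ^ 2) ≤ 1 := by
          rw [div_le_one hd0]; nlinarith
        have hη0 : 0 ≤ η := by rw [hηd]; positivity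
        have hη1 : η ≤ 1 / L := by
          rw [hηd]
          calc (1 / L) * (G ^ 2 / (G ^ 2 + σ ^ 2)) ≤ (1 / L) * 1 :=
              mul_le_mul_of_nonneg_left hu1 (by positivity)
            _ = 1 / L := mul_one _
        have hcb := coeff_bound (G := G) hL hσ hGnn
        rw [← hηd] at hcb
        have t1 : (L * η ^ 2 - η) * ⟪gradient f (x n ω), ξ (n + 1) ω⟫ ≤
            σ / (2 * L) * ‖ξ (n + 1) ω‖ := by
          calc (L * η ^ 2 - η) * ⟪gradient f (x n ω), ξ (n + 1) ω⟫
              ≤ |(L * η ^ 2 - η) * ⟪gradient f (x n ω), ξ (n + 1) ω⟫| := le_abs_self _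
            _ = |L * η ^ 2 - η| * |⟪gradient f (x n ω), ξ (n + 1) ω⟫| := abs_mul _ _
            _ ≤ |L * η ^ 2 - η| * (G * ‖ξ (n + 1) ω‖) := by
                refine mul_le_mul_of_nonneg_left ?_ (abs_nonneg _)
                rw [hGd]
                exact abs_real_inner_le_norm _ _
            _ = (|L * η ^ 2 - η| * G) * ‖ξ (n + 1) ω‖ := by ring
            _ ≤ σ / (2 * L) * ‖ξ (n + 1) ω‖ :=
                mul_le_mul_of_nonneg_right hcb (norm_nonneg _)
        have t2 : L / 2 * η ^ 2 * ‖ξ (n + 1) ω‖ ^ 2 ≤ 1 / (2 * L) * ‖ξ (n + 1) ω‖ ^ 2 := by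
          refine mul_le_mul_of_nonneg_right ?_ (sq_nonneg _)
          calc L / 2 * η ^ 2 ≤ L / 2 * (1 / L) ^ 2 := by
                refine mul_le_mul_of_nonneg_left ?_ (by positivity)
                exact pow_le_pow_left₀ hη0 hη1 2
            _ = 1 / (2 * L) := by field_simp
        have t3 : (L / 2 * η ^ 2 - η) * G ^ 2 ≤ 0 := by
          refine mul_nonpos_of_nonpos_of_nonneg ?_ (sq_nonneg G)
          have h5 : L * η ≤ 1 := by
            calc L * η ≤ L * (1 / L) := mul_le_mul_of_nonneg_left hη1 hL.le
              _ = 1 := by field_simp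
          nlinarith
        linarith [hptw, t1, t2, t3]
      refine Integrable.mono' (g := fun ω => ((f (x n ω) - f xstar)
          + σ / (2 * L) * ‖ξ (n + 1) ω‖) + 1 / (2 * L) * ‖ξ (n + 1) ω‖ ^ 2) ?_ ?_ ?_
      · exact (hfi.add (((hξint (n + 1)).norm).const_mul _)).add ((hξint2 (n + 1)).const_mul _)
      · exact ((hfcont.measurable.comp hxm').sub measurable_const).aestronglyMeasurable
      · filter_upwards with ω
        rw [Real.norm_eq_abs, abs_of_nonneg (sub_nonneg.mpr (hmin _))]
        linarith [hbound ω]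
  have hxmeas : ∀ t, t ≤ T → Measurable (x t) := fun t ht => (hmi t ht).1
  have hfint : ∀ t, t ≤ T → Integrable (fun ω => f (x t ω) - f xstar) μ :=
    fun t ht => (hmi t ht).2
  have hG2meas : ∀ t, t ≤ T → Measurable (fun ω => ‖gradient f (x t ω)‖ ^ 2) :=
    fun t ht => ((hgradcont.measurable.comp (hxmeas t ht)).norm.pow_const 2)
  have hG2int : ∀ t, t ≤ T → Integrable (fun ω => ‖gradient f (x t ω)‖ ^ 2) μ := by
    intro t ht
    refine Integrable.mono' ((hfint t ht).const_mul (2 * L))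
      (hG2meas t ht).aestronglyMeasurable ?_
    filter_upwards with ω
    rw [Real.norm_eq_abs, abs_of_nonneg (by positivity)]
    exact grad_sq_le_aux hL hdiff hsmooth xstar hmin (x t ω)
  -- the quantity φ
  set φ : ℕ → Ω → ℝ := fun t ω =>
    (‖gradient f (x t ω)‖ ^ 2 / (‖gradient f (x t ω)‖ ^ 2 + σ ^ 2)) *
      ‖gradient f (x t ω)‖ ^ 2 with hφdef
  have hφ0 : ∀ t ω, 0 ≤ φ t ω := by
    intro t ω; simp only [hφdef]; positivity
  have hudiv : ∀ t ω, ‖gradient f (x t ω)‖ ^ 2 / (‖gradient f (x t ω)‖ ^ 2 + σ ^ 2) ≤ 1 := by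
    intro t ω
    rw [div_le_one (by positivity)]
    nlinarith [sq_nonneg σ, hσ]
  have hφint : ∀ t, t ≤ T → Integrable (φ t) μ := by
    intro t ht
    have h1 : Integrable (fun ω =>
        (‖gradient f (x t ω)‖ ^ 2 / (‖gradient f (x t ω)‖ ^ 2 + σ ^ 2)) *
          ‖gradient f (x t ω)‖ ^ 2) μ := by
      refine (hG2int t ht).bdd_mul (c := 1) ?_ (Filter.Eventually.of_forall ?_)
      · exact ((hG2meas t ht).div ((hG2meas t ht).add_const _)).aestronglyMeasurable
      · intro ω
        rw [Real.norm_eq_abs, abs_of_nonneg (by positivity)]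
        exact hudiv t ω
    simpa only [hφdef] using h1
  set a : ℕ → ℝ := fun t => ∫ ω, (f (x t ω) - f xstar) ∂μ with hadef
  set b : ℕ → ℝ := fun t => ∫ ω, φ t ω ∂μ with hbdef
  have ha0 : ∀ t, 0 ≤ a t := fun t => integral_nonneg fun ω => sub_nonneg.mpr (hmin _)
  have hb0 : ∀ t, 0 ≤ b t := fun t => integral_nonneg fun ω => hφ0 t ω
  have haR : a 0 ≤ R := by
    have h1 : a 0 = f x₀ - f xstar := by
      simp only [hadef]
      have h2 : (fun ω => f (x 0 ω) - f xstar) = fun _ => f x₀ - f xstar := by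
        funext ω; rw [hx0]
      rw [h2, integral_const]; simp
    rw [h1]; exact (le_abs_self _).trans hR
  -- one-step descent in expectation
  have hstep : ∀ t, 1 ≤ t → t ≤ T → a t ≤ a (t - 1) - 1 / (2 * L) * b (t - 1) := by
    intro t ht htT
    have hsT : t - 1 ≤ T := le_trans (Nat.sub_le t 1) htT
    have hmF : F (t - 1) ≤ m0 := F.le (t - 1)
    have hxs : StronglyMeasurable[F (t - 1)] (x (t - 1)) := hadapted t ht htT
    have hupd := hupdate t ht htT
    have hgmeas : Measurable (fun ω => gradient f (x (t - 1) ω)) := hgradcont.measurable.comp (hxmeas (t - 1) hsT)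
    have hηmeas : Measurable (fun ω => (1 / L * (‖gradient f (x (t - 1) ω)‖ ^ 2 / (‖gradient f (x (t - 1) ω)‖ ^ 2 + σ ^ 2)))) :=
      ((hgmeas.norm.pow_const 2).div ((hgmeas.norm.pow_const 2).add_const _)).const_mul _
    have hη01 : ∀ ω, 0 ≤ (1 / L * (‖gradient f (x (t - 1) ω)‖ ^ 2 / (‖gradient f (x (t - 1) ω)‖ ^ 2 + σ ^ 2))) ∧ (1 / L * (‖gradient f (x (t - 1) ω)‖ ^ 2 / (‖gradient f (x (t - 1) ω)‖ ^ 2 + σ ^ 2))) ≤ 1 / L := by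
      intro ω
      constructor
      · positivity
      · calc (1 / L * (‖gradient f (x (t - 1) ω)‖ ^ 2 / (‖gradient f (x (t - 1) ω)‖ ^ 2 + σ ^ 2))) ≤ 1 / L * 1 :=
            mul_le_mul_of_nonneg_left (hudiv (t - 1) ω) (by positivity)
          _ = 1 / L := mul_one _
    -- pointwise descent
    have hptw : ∀ ω, f (x t ω) - f xstar ≤ (((f (x (t - 1) ω) - f xstar)
        + (L * (1 / L * (‖gradient f (x (t - 1) ω)‖ ^ 2 / (‖gradient f (x (t - 1) ω)‖ ^ 2 + σ ^ 2))) ^ 2 - (1 / L * (‖gradient f (x (t - 1) ω)‖ ^ 2 / (‖gradient f (x (t - 1) ω)‖ ^ 2 + σ ^ 2)))) * ⟪gradient f (x (t - 1) ω), ξ t ω⟫)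
        + L / 2 * (1 / L * (‖gradient f (x (t - 1) ω)‖ ^ 2 / (‖gradient f (x (t - 1) ω)‖ ^ 2 + σ ^ 2))) ^ 2 * ‖ξ t ω‖ ^ 2)
        + (L / 2 * (1 / L * (‖gradient f (x (t - 1) ω)‖ ^ 2 / (‖gradient f (x (t - 1) ω)‖ ^ 2 + σ ^ 2))) ^ 2 - (1 / L * (‖gradient f (x (t - 1) ω)‖ ^ 2 / (‖gradient f (x (t - 1) ω)‖ ^ 2 + σ ^ 2)))) * ‖gradient f (x (t - 1) ω)‖ ^ 2 := by
      intro ω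
      have h := step_pointwise hL hdiff hsmooth (x (t - 1) ω) (x t ω) (ξ t ω)
        (hupd ω) (f xstar)
      linarith [h]
    -- the inner-product term has zero integral
    have hcont_eta : Continuous (fun p : EuclideanSpace ℝ (Fin d) =>
        1 / L * (‖gradient f p‖ ^ 2 / (‖gradient f p‖ ^ 2 + σ ^ 2))) := by
      refine continuous_const.mul (Continuous.div ((hgradcont.norm.pow 2))
        (((hgradcont.norm.pow 2)).add continuous_const) ?_)
      intro p; positivity
    have hvSM : StronglyMeasurable[F (t - 1)] (fun ω => (L * (1 / L * (‖gradient f (x (t - 1) ω)‖ ^ 2 / (‖gradient f (x (t - 1) ω)‖ ^ 2 + σ ^ 2))) ^ 2 - (1 / L * (‖gradient f (x (t - 1) ω)‖ ^ 2 / (‖gradient f (x (t - 1) ω)‖ ^ 2 + σ ^ 2)))) • gradient f (x (t - 1) ω)) := by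
      have hΦ : Continuous (fun p : EuclideanSpace ℝ (Fin d) =>
          (L * (1 / L * (‖gradient f p‖ ^ 2 / (‖gradient f p‖ ^ 2 + σ ^ 2))) ^ 2 -
            1 / L * (‖gradient f p‖ ^ 2 / (‖gradient f p‖ ^ 2 + σ ^ 2))) • gradient f p) :=
        ((continuous_const.mul (hcont_eta.pow 2)).sub hcont_eta).smul hgradcont
      exact hΦ.comp_stronglyMeasurable hxs
    have hvbd : ∀ ω, ‖(L * (1 / L * (‖gradient f (x (t - 1) ω)‖ ^ 2 / (‖gradient f (x (t - 1) ω)‖ ^ 2 + σ ^ 2))) ^ 2 - (1 / L * (‖gradient f (x (t - 1) ω)‖ ^ 2 / (‖gradient f (x (t - 1) ω)‖ ^ 2 + σ ^ 2)))) • gradient f (x (t - 1) ω)‖ ≤ σ / (2 * L) := by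
      intro ω
      rw [norm_smul, Real.norm_eq_abs]
      exact coeff_bound hL hσ (norm_nonneg _)
    have hCzero : ∫ ω, (L * (1 / L * (‖gradient f (x (t - 1) ω)‖ ^ 2 / (‖gradient f (x (t - 1) ω)‖ ^ 2 + σ ^ 2))) ^ 2 - (1 / L * (‖gradient f (x (t - 1) ω)‖ ^ 2 / (‖gradient f (x (t - 1) ω)‖ ^ 2 + σ ^ 2)))) * ⟪gradient f (x (t - 1) ω), ξ t ω⟫ ∂μ = 0 := by
      have hCeq : (fun ω => (L * (1 / L * (‖gradient f (x (t - 1) ω)‖ ^ 2 / (‖gradient f (x (t - 1) ω)‖ ^ 2 + σ ^ 2))) ^ 2 - (1 / L * (‖gradient f (x (t - 1) ω)‖ ^ 2 / (‖gradient f (x (t - 1) ω)‖ ^ 2 + σ ^ 2)))) * ⟪gradient f (x (t - 1) ω), ξ t ω⟫) =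
          fun ω => ⟪(L * (1 / L * (‖gradient f (x (t - 1) ω)‖ ^ 2 / (‖gradient f (x (t - 1) ω)‖ ^ 2 + σ ^ 2))) ^ 2 - (1 / L * (‖gradient f (x (t - 1) ω)‖ ^ 2 / (‖gradient f (x (t - 1) ω)‖ ^ 2 + σ ^ 2)))) • gradient f (x (t - 1) ω), ξ t ω⟫ := by
        funext ω; rw [real_inner_smul_left]
      rw [hCeq]
      exact integral_inner_eq_zero hmF hvSM hvbd (hξint t) (hmean t ht htT)
    have hCint : Integrable (fun ω => (L * (1 / L * (‖gradient f (x (t - 1) ω)‖ ^ 2 / (‖gradient f (x (t - 1) ω)‖ ^ 2 + σ ^ 2))) ^ 2 - (1 / L * (‖gradient f (x (t - 1) ω)‖ ^ 2 / (‖gradient f (x (t - 1) ω)‖ ^ 2 + σ ^ 2)))) * ⟪gradient f (x (t - 1) ω), ξ t ω⟫) μ := by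
      refine Integrable.mono' (((hξint t).norm.const_mul (σ / (2 * L)))) ?_ ?_
      · exact ((((hηmeas.pow_const 2).const_mul L).sub hηmeas).mul
          (hgmeas.inner (hξmeas t))).aestronglyMeasurable
      · filter_upwards with ω
        rw [Real.norm_eq_abs, abs_mul]
        calc |L * (1 / L * (‖gradient f (x (t - 1) ω)‖ ^ 2 / (‖gradient f (x (t - 1) ω)‖ ^ 2 + σ ^ 2))) ^ 2 - (1 / L * (‖gradient f (x (t - 1) ω)‖ ^ 2 / (‖gradient f (x (t - 1) ω)‖ ^ 2 + σ ^ 2)))| * |⟪gradient f (x (t - 1) ω), ξ t ω⟫|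
            ≤ |L * (1 / L * (‖gradient f (x (t - 1) ω)‖ ^ 2 / (‖gradient f (x (t - 1) ω)‖ ^ 2 + σ ^ 2))) ^ 2 - (1 / L * (‖gradient f (x (t - 1) ω)‖ ^ 2 / (‖gradient f (x (t - 1) ω)‖ ^ 2 + σ ^ 2)))| * (‖gradient f (x (t - 1) ω)‖ * ‖ξ t ω‖) :=
              mul_le_mul_of_nonneg_left (abs_real_inner_le_norm _ _) (abs_nonneg _)
          _ = (|L * (1 / L * (‖gradient f (x (t - 1) ω)‖ ^ 2 / (‖gradient f (x (t - 1) ω)‖ ^ 2 + σ ^ 2))) ^ 2 - (1 / L * (‖gradient f (x (t - 1) ω)‖ ^ 2 / (‖gradient f (x (t - 1) ω)‖ ^ 2 + σ ^ 2)))| * ‖gradient f (x (t - 1) ω)‖) * ‖ξ t ω‖ := by ring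
          _ ≤ σ / (2 * L) * ‖ξ t ω‖ :=
              mul_le_mul_of_nonneg_right (coeff_bound hL hσ (norm_nonneg _)) (norm_nonneg _)
    -- the noise-variance term
    have hhSM : StronglyMeasurable[F (t - 1)] (fun ω => L / 2 * (1 / L * (‖gradient f (x (t - 1) ω)‖ ^ 2 / (‖gradient f (x (t - 1) ω)‖ ^ 2 + σ ^ 2))) ^ 2) := by
      have hΨ : Continuous (fun p : EuclideanSpace ℝ (Fin d) =>
          L / 2 * (1 / L * (‖gradient f p‖ ^ 2 / (‖gradient f p‖ ^ 2 + σ ^ 2))) ^ 2) :=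
        continuous_const.mul (hcont_eta.pow 2)
      exact hΨ.comp_stronglyMeasurable hxs
    have hh0 : ∀ ω, 0 ≤ L / 2 * (1 / L * (‖gradient f (x (t - 1) ω)‖ ^ 2 / (‖gradient f (x (t - 1) ω)‖ ^ 2 + σ ^ 2))) ^ 2 := fun ω => by positivity
    have hhB : ∀ ω, L / 2 * (1 / L * (‖gradient f (x (t - 1) ω)‖ ^ 2 / (‖gradient f (x (t - 1) ω)‖ ^ 2 + σ ^ 2))) ^ 2 ≤ 1 / (2 * L) := by
      intro ω
      obtain ⟨h0, h1⟩ := hη01 ω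
      calc L / 2 * (1 / L * (‖gradient f (x (t - 1) ω)‖ ^ 2 / (‖gradient f (x (t - 1) ω)‖ ^ 2 + σ ^ 2))) ^ 2 ≤ L / 2 * (1 / L) ^ 2 :=
          mul_le_mul_of_nonneg_left (pow_le_pow_left₀ h0 h1 2) (by positivity)
        _ = 1 / (2 * L) := by field_simp
    have hQle : ∫ ω, L / 2 * (1 / L * (‖gradient f (x (t - 1) ω)‖ ^ 2 / (‖gradient f (x (t - 1) ω)‖ ^ 2 + σ ^ 2))) ^ 2 * ‖ξ t ω‖ ^ 2 ∂μ ≤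
        σ ^ 2 * ∫ ω, L / 2 * (1 / L * (‖gradient f (x (t - 1) ω)‖ ^ 2 / (‖gradient f (x (t - 1) ω)‖ ^ 2 + σ ^ 2))) ^ 2 ∂μ :=
      integral_mul_le_of_condexp_le hmF hhSM hh0 hhB (hξint2 t) (hvar t ht htT)
    have hQint : Integrable (fun ω => L / 2 * (1 / L * (‖gradient f (x (t - 1) ω)‖ ^ 2 / (‖gradient f (x (t - 1) ω)‖ ^ 2 + σ ^ 2))) ^ 2 * ‖ξ t ω‖ ^ 2) μ := by
      refine Integrable.mono' ((hξint2 t).const_mul (1 / (2 * L))) ?_ ?_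
      · exact (((hηmeas.pow_const 2).const_mul (L / 2)).mul
          ((hξmeas t).norm.pow_const 2)).aestronglyMeasurable
      · filter_upwards with ω
        rw [Real.norm_eq_abs, abs_of_nonneg (by positivity)]
        exact mul_le_mul_of_nonneg_right (hhB ω) (sq_nonneg _)
    have hhint : Integrable (fun ω => L / 2 * (1 / L * (‖gradient f (x (t - 1) ω)‖ ^ 2 / (‖gradient f (x (t - 1) ω)‖ ^ 2 + σ ^ 2))) ^ 2) μ := by
      refine Integrable.mono' (integrable_const (1 / (2 * L)))
        ((hhSM.mono hmF).aestronglyMeasurable) ?_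
      filter_upwards with ω
      rw [Real.norm_eq_abs, abs_of_nonneg (hh0 ω)]
      exact hhB ω
    -- the deterministic decrease term
    have hDmeas : Measurable (fun ω => (L / 2 * (1 / L * (‖gradient f (x (t - 1) ω)‖ ^ 2 / (‖gradient f (x (t - 1) ω)‖ ^ 2 + σ ^ 2))) ^ 2 - (1 / L * (‖gradient f (x (t - 1) ω)‖ ^ 2 / (‖gradient f (x (t - 1) ω)‖ ^ 2 + σ ^ 2)))) * ‖gradient f (x (t - 1) ω)‖ ^ 2) :=
      (((hηmeas.pow_const 2).const_mul (L / 2)).sub hηmeas).mul (hgmeas.norm.pow_const 2)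
    have hDint : Integrable (fun ω => (L / 2 * (1 / L * (‖gradient f (x (t - 1) ω)‖ ^ 2 / (‖gradient f (x (t - 1) ω)‖ ^ 2 + σ ^ 2))) ^ 2 - (1 / L * (‖gradient f (x (t - 1) ω)‖ ^ 2 / (‖gradient f (x (t - 1) ω)‖ ^ 2 + σ ^ 2)))) * ‖gradient f (x (t - 1) ω)‖ ^ 2) μ := by
      refine (hG2int (t - 1) hsT).bdd_mul
        ((((hηmeas.pow_const 2).const_mul (L / 2)).sub hηmeas).aestronglyMeasurable)
        (c := 3 / (2 * L)) (Filter.Eventually.of_forall ?_)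
      intro ω
      obtain ⟨h0, h1⟩ := hη01 ω
      rw [Real.norm_eq_abs, abs_le]
      have hsq : (1 / L * (‖gradient f (x (t - 1) ω)‖ ^ 2 / (‖gradient f (x (t - 1) ω)‖ ^ 2 + σ ^ 2))) ^ 2 ≤ (1 / L) ^ 2 := pow_le_pow_left₀ h0 h1 2
      constructor
      · have : 0 ≤ L / 2 * (1 / L * (‖gradient f (x (t - 1) ω)‖ ^ 2 / (‖gradient f (x (t - 1) ω)‖ ^ 2 + σ ^ 2))) ^ 2 := by positivity
        have h2 : (1 / L * (‖gradient f (x (t - 1) ω)‖ ^ 2 / (‖gradient f (x (t - 1) ω)‖ ^ 2 + σ ^ 2))) ≤ 3 / (2 * L) := by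
          calc (1 / L * (‖gradient f (x (t - 1) ω)‖ ^ 2 / (‖gradient f (x (t - 1) ω)‖ ^ 2 + σ ^ 2))) ≤ 1 / L := h1
            _ ≤ 3 / (2 * L) := by rw [div_le_div_iff₀ (by positivity) (by positivity)]; nlinarith
        linarith
      · have h3 : L / 2 * (1 / L * (‖gradient f (x (t - 1) ω)‖ ^ 2 / (‖gradient f (x (t - 1) ω)‖ ^ 2 + σ ^ 2))) ^ 2 ≤ 1 / (2 * L) := hhB ω
        have h4 : 1 / (2 * L) ≤ 3 / (2 * L) := by
          rw [div_le_div_iff₀ (by positivity) (by positivity)]; nlinarith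
        linarith
    -- putting it together
    have hAint : Integrable (fun ω => f (x (t - 1) ω) - f xstar) μ := hfint (t - 1) hsT
    have hAC : Integrable (fun ω => (f (x (t - 1) ω) - f xstar)
        + (L * (1 / L * (‖gradient f (x (t - 1) ω)‖ ^ 2 / (‖gradient f (x (t - 1) ω)‖ ^ 2 + σ ^ 2))) ^ 2 - (1 / L * (‖gradient f (x (t - 1) ω)‖ ^ 2 / (‖gradient f (x (t - 1) ω)‖ ^ 2 + σ ^ 2)))) * ⟪gradient f (x (t - 1) ω), ξ t ω⟫) μ := hAint.add hCint
    have hACQ : Integrable (fun ω => ((f (x (t - 1) ω) - f xstar)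
        + (L * (1 / L * (‖gradient f (x (t - 1) ω)‖ ^ 2 / (‖gradient f (x (t - 1) ω)‖ ^ 2 + σ ^ 2))) ^ 2 - (1 / L * (‖gradient f (x (t - 1) ω)‖ ^ 2 / (‖gradient f (x (t - 1) ω)‖ ^ 2 + σ ^ 2)))) * ⟪gradient f (x (t - 1) ω), ξ t ω⟫)
        + L / 2 * (1 / L * (‖gradient f (x (t - 1) ω)‖ ^ 2 / (‖gradient f (x (t - 1) ω)‖ ^ 2 + σ ^ 2))) ^ 2 * ‖ξ t ω‖ ^ 2) μ := hAC.add hQint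
    have hACQD : Integrable (fun ω => (((f (x (t - 1) ω) - f xstar)
        + (L * (1 / L * (‖gradient f (x (t - 1) ω)‖ ^ 2 / (‖gradient f (x (t - 1) ω)‖ ^ 2 + σ ^ 2))) ^ 2 - (1 / L * (‖gradient f (x (t - 1) ω)‖ ^ 2 / (‖gradient f (x (t - 1) ω)‖ ^ 2 + σ ^ 2)))) * ⟪gradient f (x (t - 1) ω), ξ t ω⟫)
        + L / 2 * (1 / L * (‖gradient f (x (t - 1) ω)‖ ^ 2 / (‖gradient f (x (t - 1) ω)‖ ^ 2 + σ ^ 2))) ^ 2 * ‖ξ t ω‖ ^ 2)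
        + (L / 2 * (1 / L * (‖gradient f (x (t - 1) ω)‖ ^ 2 / (‖gradient f (x (t - 1) ω)‖ ^ 2 + σ ^ 2))) ^ 2 - (1 / L * (‖gradient f (x (t - 1) ω)‖ ^ 2 / (‖gradient f (x (t - 1) ω)‖ ^ 2 + σ ^ 2)))) * ‖gradient f (x (t - 1) ω)‖ ^ 2) μ := hACQ.add hDint
    have hIsum : a t ≤ ∫ ω, ((((f (x (t - 1) ω) - f xstar)
        + (L * (1 / L * (‖gradient f (x (t - 1) ω)‖ ^ 2 / (‖gradient f (x (t - 1) ω)‖ ^ 2 + σ ^ 2))) ^ 2 - (1 / L * (‖gradient f (x (t - 1) ω)‖ ^ 2 / (‖gradient f (x (t - 1) ω)‖ ^ 2 + σ ^ 2)))) * ⟪gradient f (x (t - 1) ω), ξ t ω⟫)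
        + L / 2 * (1 / L * (‖gradient f (x (t - 1) ω)‖ ^ 2 / (‖gradient f (x (t - 1) ω)‖ ^ 2 + σ ^ 2))) ^ 2 * ‖ξ t ω‖ ^ 2)
        + (L / 2 * (1 / L * (‖gradient f (x (t - 1) ω)‖ ^ 2 / (‖gradient f (x (t - 1) ω)‖ ^ 2 + σ ^ 2))) ^ 2 - (1 / L * (‖gradient f (x (t - 1) ω)‖ ^ 2 / (‖gradient f (x (t - 1) ω)‖ ^ 2 + σ ^ 2)))) * ‖gradient f (x (t - 1) ω)‖ ^ 2) ∂μ := by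
      simp only [hadef]
      exact integral_mono (hfint t htT) hACQD hptw
    rw [integral_add hACQ hDint, integral_add hAC hQint, integral_add hAint hCint] at hIsum
    rw [hCzero] at hIsum
    -- identify σ² E[h] + E[D] with -(1/(2L)) b (t-1)
    have hptid : ∀ ω, σ ^ 2 * (L / 2 * (1 / L * (‖gradient f (x (t - 1) ω)‖ ^ 2 / (‖gradient f (x (t - 1) ω)‖ ^ 2 + σ ^ 2))) ^ 2) + (L / 2 * (1 / L * (‖gradient f (x (t - 1) ω)‖ ^ 2 / (‖gradient f (x (t - 1) ω)‖ ^ 2 + σ ^ 2))) ^ 2 - (1 / L * (‖gradient f (x (t - 1) ω)‖ ^ 2 / (‖gradient f (x (t - 1) ω)‖ ^ 2 + σ ^ 2)))) * ‖gradient f (x (t - 1) ω)‖ ^ 2 =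
        -(1 / (2 * L)) * φ (t - 1) ω := by
      intro ω
      simp only [hφdef]
      have hd0 : (0:ℝ) < ‖gradient f (x (t - 1) ω)‖ ^ 2 + σ ^ 2 := by positivity
      field_simp
      ring
    have hfinal : σ ^ 2 * (∫ ω, L / 2 * (1 / L * (‖gradient f (x (t - 1) ω)‖ ^ 2 / (‖gradient f (x (t - 1) ω)‖ ^ 2 + σ ^ 2))) ^ 2 ∂μ) +
        ∫ ω, (L / 2 * (1 / L * (‖gradient f (x (t - 1) ω)‖ ^ 2 / (‖gradient f (x (t - 1) ω)‖ ^ 2 + σ ^ 2))) ^ 2 - (1 / L * (‖gradient f (x (t - 1) ω)‖ ^ 2 / (‖gradient f (x (t - 1) ω)‖ ^ 2 + σ ^ 2)))) * ‖gradient f (x (t - 1) ω)‖ ^ 2 ∂μ = -(1 / (2 * L)) * b (t - 1) := by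
      rw [← integral_const_mul (σ ^ 2), ← integral_add (hhint.const_mul (σ ^ 2)) hDint]
      have h6 : ∫ ω, (σ ^ 2 * (L / 2 * (1 / L * (‖gradient f (x (t - 1) ω)‖ ^ 2 / (‖gradient f (x (t - 1) ω)‖ ^ 2 + σ ^ 2))) ^ 2) + (L / 2 * (1 / L * (‖gradient f (x (t - 1) ω)‖ ^ 2 / (‖gradient f (x (t - 1) ω)‖ ^ 2 + σ ^ 2))) ^ 2 - (1 / L * (‖gradient f (x (t - 1) ω)‖ ^ 2 / (‖gradient f (x (t - 1) ω)‖ ^ 2 + σ ^ 2)))) * ‖gradient f (x (t - 1) ω)‖ ^ 2) ∂μ =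
          ∫ ω, -(1 / (2 * L)) * φ (t - 1) ω ∂μ := by
        refine integral_congr_ae ?_
        filter_upwards with ω
        exact hptid ω
      rw [h6, integral_const_mul]
    have hQsum : ∫ ω, L / 2 * (1 / L * (‖gradient f (x (t - 1) ω)‖ ^ 2 / (‖gradient f (x (t - 1) ω)‖ ^ 2 + σ ^ 2))) ^ 2 * ‖ξ t ω‖ ^ 2 ∂μ +
        ∫ ω, (L / 2 * (1 / L * (‖gradient f (x (t - 1) ω)‖ ^ 2 / (‖gradient f (x (t - 1) ω)‖ ^ 2 + σ ^ 2))) ^ 2 - (1 / L * (‖gradient f (x (t - 1) ω)‖ ^ 2 / (‖gradient f (x (t - 1) ω)‖ ^ 2 + σ ^ 2)))) * ‖gradient f (x (t - 1) ω)‖ ^ 2 ∂μ ≤ -(1 / (2 * L)) * b (t - 1) := by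
      rw [← hfinal]
      have := hQle
      linarith
    have haeq : ∫ ω, (f (x (t - 1) ω) - f xstar) ∂μ = a (t - 1) := rfl
    rw [haeq] at hIsum
    linarith [hIsum, hQsum]
  -- telescoping sum
  have hsum : ∀ n, n ≤ T → a n + 1 / (2 * L) * ∑ s ∈ Finset.range n, b s ≤ a 0 := by
    intro n
    induction n with
    | zero => intro _; simp
    | succ n ih =>
      intro h
      have h1 := ih (Nat.le_of_succ_le h)
      have h2 := hstep (n + 1) (Nat.le_add_left 1 n) h
      simp only [Nat.add_sub_cancel] at h2
      rw [Finset.sum_range_succ, mul_add]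
      linarith
  -- bounds on gradient integrals
  have hG2a : ∀ t, t ≤ T → ∫ ω, ‖gradient f (x t ω)‖ ^ 2 ∂μ ≤ 2 * L * a t := by
    intro t ht
    calc ∫ ω, ‖gradient f (x t ω)‖ ^ 2 ∂μ
        ≤ ∫ ω, 2 * L * (f (x t ω) - f xstar) ∂μ :=
          integral_mono (hG2int t ht) ((hfint t ht).const_mul _)
            (fun ω => grad_sq_le_aux hL hdiff hsmooth xstar hmin (x t ω))
      _ = 2 * L * a t := by rw [integral_const_mul]
  have hbG : ∀ t, t ≤ T → ∫ ω, ‖gradient f (x t ω)‖ ^ 2 ∂μ ≤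
      b t + σ * Real.sqrt (b t) := by
    intro t ht
    have hsqint : Integrable (fun ω => Real.sqrt (φ t ω)) μ :=
      integrable_sqrt (hφ0 t) (hφint t ht)
    have hσsqint : Integrable (fun ω => σ * Real.sqrt (φ t ω)) μ := hsqint.const_mul σ
    calc ∫ ω, ‖gradient f (x t ω)‖ ^ 2 ∂μ
        ≤ ∫ ω, (φ t ω + σ * Real.sqrt (φ t ω)) ∂μ := by
          refine integral_mono (hG2int t ht) ((hφint t ht).add hσsqint) ?_
          intro ω
          simp only [hφdef]
          exact ptwise_sq_le hσ (norm_nonneg _)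
      _ = b t + σ * ∫ ω, Real.sqrt (φ t ω) ∂μ := by
          rw [integral_add (hφint t ht) hσsqint, integral_const_mul]
      _ ≤ b t + σ * Real.sqrt (b t) := by
          refine add_le_add (le_refl _) (mul_le_mul_of_nonneg_left ?_ hσ.le)
          exact integral_sqrt_le_sqrt_integral (hφ0 t) (hφint t ht)
  -- final case analysis
  have hT1 : (1:ℝ) ≤ (T:ℝ) := by exact_mod_cast hT
  have hTpos : (0:ℝ) < (T:ℝ) := lt_of_lt_of_le one_pos hT1
  set ε : ℝ := 2 * L * R / (T:ℝ) with hεdef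
  have hε0 : 0 ≤ ε := by rw [hεdef]; positivity
  by_cases hcase : ∃ s, 1 ≤ s ∧ s ≤ T - 1 ∧ b s ≤ ε
  · obtain ⟨s, h1, h2, h3⟩ := hcase
    have hsT : s ≤ T := h2.trans (Nat.sub_le T 1)
    refine ⟨s, h1, hsT, ?_⟩
    calc ∫ ω, ‖gradient f (x s ω)‖ ^ 2 ∂μ ≤ b s + σ * Real.sqrt (b s) := hbG s hsT
      _ ≤ ε + σ * Real.sqrt ε :=
          add_le_add h3 (mul_le_mul_of_nonneg_left (Real.sqrt_le_sqrt h3) hσ.le)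
  · push_neg at hcase
    refine ⟨T, hT, le_refl T, ?_⟩
    have hsum1 : ((T:ℝ) - 1) * ε ≤ ∑ s ∈ Finset.range T, b s := by
      have hsub : Finset.Ico 1 T ⊆ Finset.range T := by
        intro i hi; rw [Finset.mem_range]; exact (Finset.mem_Ico.mp hi).2
      have h4 : ∑ s ∈ Finset.Ico 1 T, b s ≤ ∑ s ∈ Finset.range T, b s :=
        Finset.sum_le_sum_of_subset_of_nonneg hsub (fun i _ _ => hb0 i)
      have h5 : (Finset.Ico 1 T).card • ε ≤ ∑ s ∈ Finset.Ico 1 T, b s := by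
        refine Finset.card_nsmul_le_sum _ _ _ ?_
        intro i hi
        obtain ⟨hi1, hi2⟩ := Finset.mem_Ico.mp hi
        exact (hcase i hi1 (Nat.le_sub_one_of_lt hi2)).le
      rw [Nat.card_Ico, nsmul_eq_mul] at h5
      have hcast : ((T - 1 : ℕ) : ℝ) = (T:ℝ) - 1 := by
        rw [Nat.cast_sub hT]; simp
      rw [hcast] at h5
      linarith
    have h6 : a T ≤ R - 1 / (2 * L) * (((T:ℝ) - 1) * ε) := by
      have h7 := hsum T (le_refl T)
      have h8 : 1 / (2 * L) * (((T:ℝ) - 1) * ε) ≤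
          1 / (2 * L) * ∑ s ∈ Finset.range T, b s :=
        mul_le_mul_of_nonneg_left hsum1 (by positivity)
      linarith [haR]
    have h9 : R - 1 / (2 * L) * (((T:ℝ) - 1) * ε) = R / (T:ℝ) := by
      rw [hεdef]
      field_simp
      ring
    have h10 : 2 * L * a T ≤ 2 * L * (R / (T:ℝ)) := by
      refine mul_le_mul_of_nonneg_left ?_ (by positivity)
      rw [← h9]; exact h6
    have h11 : 2 * L * (R / (T:ℝ)) = ε := by rw [hεdef]; ring
    have h12 : 0 ≤ σ * Real.sqrt ε := mul_nonneg hσ.le (Real.sqrt_nonneg _)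
    have h13 := hG2a T (le_refl T)
    linarith
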